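/- Let x0 < 0 and let (a, b) with a ∈ [2x0, 0], b ≥ 0 lie on the normal Tricomi curve, i.e. 9a^2 + 4b^3 = 18 a x0. Then for every t ≥ 0 the flowed point (a e^{−3t}, b e^{−2t}) lies inside the region bounded by the normal curve: 9(a e^{−3t} − x0)^2 + 4 (b e^{−2t})^3 ≤ 9 x0^2. Equivalently, 9a^2 − 18 a x0 e^{3t} + 4 b^3 ≤ 0 for every t ≥ 0. -/
import Mathlib


/-- Points of the normal Tricomi curve `9(x-x0)^2 + 4y^3 = 9x0^2`
flow, under `F_t(a,b) = (a e^{-3t}, b e^{-2t})` with `t ≥ 0`, into the closed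
region bounded by the normal curve. -/
theorem normal_curve_flows_inside
    (x0 a b : ℝ) (hx0 : x0 < 0)
    (ha : a ∈ Set.Icc (2 * x0) 0) (hb : 0 ≤ b)
    (hcurve : 9 * a ^ 2 + 4 * b ^ 3 = 18 * a * x0) :
    ∀ t : ℝ, 0 ≤ t →
      9 * (a * Real.exp (-3 * t) - x0) ^ 2 + 4 * (b * Real.exp (-2 * t)) ^ 3 ≤ 9 * x0 ^ 2 ∧
      9 * a ^ 2 - 18 * a * x0 * Real.exp (3 * t) + 4 * b ^ 3 ≤ 0 := by
  intro t ht
  obtain ⟨ha1, ha2⟩ := ha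
  have hax0 : 0 ≤ a * x0 := by nlinarith
  have hu0 : 0 < Real.exp (-3 * t) := Real.exp_pos _
  have hu1 : Real.exp (-3 * t) ≤ 1 := Real.exp_le_one_iff.mpr (by nlinarith)
  have hkey : (b * Real.exp (-2 * t)) ^ 3 = b ^ 3 * Real.exp (-3 * t) ^ 2 := by
    rw [mul_pow, ← Real.exp_nat_mul, ← Real.exp_nat_mul]
    norm_num
    exact Or.inl (by ring)
  constructor
  · rw [hkey]
    nlinarith [mul_nonneg (mul_nonneg hu0.le (sub_nonneg.2 hu1)) hax0, sq_nonneg (Real.exp (-3*t))]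
  · have hE : 1 ≤ Real.exp (3 * t) := Real.one_le_exp (by linarith)
    nlinarith [mul_nonneg (sub_nonneg.2 hE) hax0]
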